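/- Let w₁, w₂, w₃ : ℝ → ℝ be real-valued functions and let p₁, p₂, p₃ : ℝ → ℂ be differentiable functions satisfying dp₁/dt = ½(w₂ conj(p₃) + w₃ conj(p₂)), dp₂/dt = −½(w₃ conj(p₁) + w₁ conj(p₃)) and dp₃/dt = −½(w₁ conj(p₂) + w₂ conj(p₁)). Write p_j = u_j + i v_j with u_j, v_j : ℝ → ℝ. Then: (i) du₁/dt = ½(w₂u₃ + w₃u₂), du₂/dt = −½(w₃u₁ + w₁u₃), du₃/dt = −½(w₁u₂ + w₂u₁); (ii) dv₁/dt = −½(w₂v₃ + w₃v₂), dv₂/dt = ½(w₃v₁ + w₁v₃), dv₃/dt = ½(w₁v₂ + w₂v₁); and (iii) the function u₁v₁ − u₂v₂ − u₃v₃ is constant. -/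

import Mathlib

noncomputable section

open Complex ComplexConjugate

theorem statement_11
    (w₁ w₂ w₃ : ℝ → ℝ) (p₁ p₂ p₃ : ℝ → ℂ)
    (hp1 : ∀ t : ℝ, HasDerivAt p₁
      ((1/2 : ℂ) * ((w₂ t : ℂ) * conj (p₃ t) + (w₃ t : ℂ) * conj (p₂ t))) t)
    (hp2 : ∀ t : ℝ, HasDerivAt p₂
      (-(1/2 : ℂ) * ((w₃ t : ℂ) * conj (p₁ t) + (w₁ t : ℂ) * conj (p₃ t))) t)
    (hp3 : ∀ t : ℝ, HasDerivAt p₃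
      (-(1/2 : ℂ) * ((w₁ t : ℂ) * conj (p₂ t) + (w₂ t : ℂ) * conj (p₁ t))) t) :
    -- (i) equations for the real parts u_j = Re p_j
    (∀ t : ℝ, HasDerivAt (fun s => (p₁ s).re)
      ((1/2) * (w₂ t * (p₃ t).re + w₃ t * (p₂ t).re)) t) ∧
    (∀ t : ℝ, HasDerivAt (fun s => (p₂ s).re)
      (-(1/2) * (w₃ t * (p₁ t).re + w₁ t * (p₃ t).re)) t) ∧
    (∀ t : ℝ, HasDerivAt (fun s => (p₃ s).re)
      (-(1/2) * (w₁ t * (p₂ t).re + w₂ t * (p₁ t).re)) t) ∧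
    -- (ii) equations for the imaginary parts v_j = Im p_j
    (∀ t : ℝ, HasDerivAt (fun s => (p₁ s).im)
      (-(1/2) * (w₂ t * (p₃ t).im + w₃ t * (p₂ t).im)) t) ∧
    (∀ t : ℝ, HasDerivAt (fun s => (p₂ s).im)
      ((1/2) * (w₃ t * (p₁ t).im + w₁ t * (p₃ t).im)) t) ∧
    (∀ t : ℝ, HasDerivAt (fun s => (p₃ s).im)
      ((1/2) * (w₁ t * (p₂ t).im + w₂ t * (p₁ t).im)) t) ∧
    -- (iii) u₁v₁ − u₂v₂ − u₃v₃ is constant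
    (∀ s t : ℝ,
      (p₁ s).re * (p₁ s).im - (p₂ s).re * (p₂ s).im - (p₃ s).re * (p₃ s).im
      = (p₁ t).re * (p₁ t).im - (p₂ t).re * (p₂ t).im - (p₃ t).re * (p₃ t).im) := by
  have hre : ∀ (p : ℝ → ℂ) (d : ℂ) (t : ℝ), HasDerivAt p d t →
      HasDerivAt (fun s => (p s).re) d.re t := fun p d t h =>
    Complex.reCLM.hasFDerivAt.comp_hasDerivAt t h
  have him : ∀ (p : ℝ → ℂ) (d : ℂ) (t : ℝ), HasDerivAt p d t →
      HasDerivAt (fun s => (p s).im) d.im t := fun p d t h =>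
    Complex.imCLM.hasFDerivAt.comp_hasDerivAt t h
  have hu1 : ∀ t : ℝ, HasDerivAt (fun s => (p₁ s).re)
      ((1/2) * (w₂ t * (p₃ t).re + w₃ t * (p₂ t).re)) t := by
    intro t
    have := hre _ _ t (hp1 t)
    convert this using 1
    simp [Complex.mul_re, Complex.add_re] <;> ring
  have hu2 : ∀ t : ℝ, HasDerivAt (fun s => (p₂ s).re)
      (-(1/2) * (w₃ t * (p₁ t).re + w₁ t * (p₃ t).re)) t := by
    intro t
    have := hre _ _ t (hp2 t)
    convert this using 1
    simp [Complex.mul_re, Complex.add_re] <;> ring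
  have hu3 : ∀ t : ℝ, HasDerivAt (fun s => (p₃ s).re)
      (-(1/2) * (w₁ t * (p₂ t).re + w₂ t * (p₁ t).re)) t := by
    intro t
    have := hre _ _ t (hp3 t)
    convert this using 1
    simp [Complex.mul_re, Complex.add_re] <;> ring
  have hv1 : ∀ t : ℝ, HasDerivAt (fun s => (p₁ s).im)
      (-(1/2) * (w₂ t * (p₃ t).im + w₃ t * (p₂ t).im)) t := by
    intro t
    have := him _ _ t (hp1 t)
    convert this using 1
    simp [Complex.mul_im, Complex.add_im] <;> ring
  have hv2 : ∀ t : ℝ, HasDerivAt (fun s => (p₂ s).im)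
      ((1/2) * (w₃ t * (p₁ t).im + w₁ t * (p₃ t).im)) t := by
    intro t
    have := him _ _ t (hp2 t)
    convert this using 1
    simp [Complex.mul_im, Complex.add_im] <;> ring
  have hv3 : ∀ t : ℝ, HasDerivAt (fun s => (p₃ s).im)
      ((1/2) * (w₁ t * (p₂ t).im + w₂ t * (p₁ t).im)) t := by
    intro t
    have := him _ _ t (hp3 t)
    convert this using 1
    simp [Complex.mul_im, Complex.add_im] <;> ring
  refine ⟨hu1, hu2, hu3, hv1, hv2, hv3, ?_⟩
  have hf : ∀ t : ℝ, HasDerivAt (fun s =>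
      (p₁ s).re * (p₁ s).im - (p₂ s).re * (p₂ s).im - (p₃ s).re * (p₃ s).im) 0 t := by
    intro t
    have h := (((hu1 t).mul (hv1 t)).sub ((hu2 t).mul (hv2 t))).sub
      ((hu3 t).mul (hv3 t))
    refine h.congr_deriv ?_
    ring
  intro s t
  exact is_const_of_deriv_eq_zero (fun x => (hf x).differentiableAt)
    (fun x => (hf x).deriv) s t
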